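/- For every integer d ≥ 1 and every M > 0 there exists a constant C = C(d, M) with the following property: for every integer n ≥ 1 and every function q : [0,∞) → ℝ which is (d+1)-times continuously differentiable with |q^{(i)}(t)| ≤ M for all t ≥ 0 and 0 ≤ i ≤ d+1, and which satisfies q(t) = 0 for all t ≥ 2, the trigonometric polynomial Q(θ) = q(0) + 2·∑_{k=1}^{2n} q(k/n)·cos(kθ) satisfies (1/2π)∫_0^{2π} |Q(θ)| dθ ≤ C. -/

import Mathlib

open Finset Real intervalIntegral

/-- The (scaled) Fejér kernel of order `m`: `(m+1) F_m(θ)`. -/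
noncomputable def fejP (m : ℕ) (θ : ℝ) : ℝ :=
  ((m:ℝ)+1) + 2 * ∑ l ∈ Finset.Icc 1 m, ((m:ℝ)+1-(l:ℝ)) * Real.cos ((l:ℝ)*θ)

lemma fejP_eq_sq (m : ℕ) (θ : ℝ) :
    fejP m θ = (∑ j ∈ Finset.range (m+1), Real.cos ((j:ℝ)*θ))^2
      + (∑ j ∈ Finset.range (m+1), Real.sin ((j:ℝ)*θ))^2 := by
  induction m with
  | zero => simp [fejP]
  | succ m ih =>
    have h1 : (1:ℕ) ≤ m + 1 := Nat.le_add_left 1 m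
    have hcross : (∑ j ∈ Finset.range (m+1), Real.cos ((j:ℝ)*θ)) * Real.cos (((m:ℝ)+1)*θ)
        + (∑ j ∈ Finset.range (m+1), Real.sin ((j:ℝ)*θ)) * Real.sin (((m:ℝ)+1)*θ)
        = ∑ l ∈ Finset.Icc 1 (m+1), Real.cos ((l:ℝ)*θ) := by
      rw [Finset.sum_mul, Finset.sum_mul, ← Finset.sum_add_distrib]
      have step : ∀ j ∈ Finset.range (m+1),
          Real.cos ((j:ℝ)*θ) * Real.cos (((m:ℝ)+1)*θ)
            + Real.sin ((j:ℝ)*θ) * Real.sin (((m:ℝ)+1)*θ)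
          = Real.cos (((m:ℝ)+1-(j:ℝ))*θ) := by
        intro j _
        have h := Real.cos_sub (((m:ℝ)+1)*θ) ((j:ℝ)*θ)
        have e : ((m:ℝ)+1-(j:ℝ))*θ = ((m:ℝ)+1)*θ - (j:ℝ)*θ := by ring
        rw [e, h]; ring
      rw [Finset.sum_congr rfl step]
      have refl1 : ∀ j ∈ Finset.range (m+1),
          Real.cos (((m:ℝ)+1-(j:ℝ))*θ) = (fun i : ℕ => Real.cos (((i:ℝ)+1)*θ)) (m + 1 - 1 - j) := by
        intro j hj
        have hj' : j ≤ m := Nat.lt_succ_iff.mp (Finset.mem_range.mp hj)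
        simp only [Nat.add_sub_cancel]
        rw [Nat.cast_sub hj']
        ring_nf
      rw [Finset.sum_congr rfl refl1, Finset.sum_range_reflect (fun i => Real.cos (((i:ℝ)+1)*θ)) (m+1)]
      rw [show Finset.Icc 1 (m+1) = Finset.Ico 1 (m+2) from rfl, Finset.sum_Ico_eq_sum_range]
      refine Finset.sum_congr rfl fun i _ => ?_
      push_cast; ring_nf
    have hsplit : ∑ l ∈ Finset.Icc 1 (m+1), ((m:ℝ)+1+1-(l:ℝ)) * Real.cos ((l:ℝ)*θ)
        = ∑ l ∈ Finset.Icc 1 m, ((m:ℝ)+1-(l:ℝ)) * Real.cos ((l:ℝ)*θ)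
          + ∑ l ∈ Finset.Icc 1 (m+1), Real.cos ((l:ℝ)*θ) := by
      rw [Finset.sum_Icc_succ_top h1, Finset.sum_Icc_succ_top h1,
        show ∑ l ∈ Finset.Icc 1 m, ((m:ℝ)+1+1-(l:ℝ)) * Real.cos ((l:ℝ)*θ)
          = ∑ l ∈ Finset.Icc 1 m, (((m:ℝ)+1-(l:ℝ)) * Real.cos ((l:ℝ)*θ) + Real.cos ((l:ℝ)*θ))
          from Finset.sum_congr rfl fun l _ => by ring, Finset.sum_add_distrib]
      push_cast; ring
    have hpyth := Real.sin_sq_add_cos_sq (((m:ℝ)+1)*θ)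
    rw [Finset.sum_range_succ (fun j : ℕ => Real.cos ((j:ℝ)*θ)) (m+1),
      Finset.sum_range_succ (fun j : ℕ => Real.sin ((j:ℝ)*θ)) (m+1)]
    simp only [fejP] at ih ⊢
    push_cast at ih ⊢
    linear_combination ih + 2*hsplit - 2*hcross - hpyth

lemma fejP_nonneg (m : ℕ) (θ : ℝ) : 0 ≤ fejP m θ := by
  rw [fejP_eq_sq]; positivity

lemma fejP_cont (m : ℕ) : Continuous (fejP m) := by
  unfold fejP
  exact continuous_const.add (continuous_const.mul (continuous_finset_sum _ fun l _ =>
    continuous_const.mul (Real.continuous_cos.comp (continuous_const.mul continuous_id))))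

lemma fejP_integral (m : ℕ) :
    ∫ θ in (0:ℝ)..(2*Real.pi), fejP m θ = 2*Real.pi*((m:ℝ)+1) := by
  have hcos : ∀ l : ℕ, l ∈ Finset.Icc 1 m →
      ∫ θ in (0:ℝ)..(2*Real.pi), ((m:ℝ)+1-(l:ℝ)) * Real.cos ((l:ℝ)*θ) = 0 := by
    intro l hl
    have hl1 : 1 ≤ l := (Finset.mem_Icc.mp hl).1
    have hc : (l:ℝ) ≠ 0 := by positivity
    rw [intervalIntegral.integral_const_mul]
    rw [intervalIntegral.integral_comp_mul_left (fun x => Real.cos x) hc]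
    have : Real.sin ((l:ℝ) * (2*Real.pi)) = 0 := by
      have : (l:ℝ) * (2*Real.pi) = (2*l : ℕ) * Real.pi := by push_cast; ring
      rw [this, Real.sin_nat_mul_pi]
    simp [integral_cos, this]
  have hint : ∀ l ∈ Finset.Icc 1 m,
      IntervalIntegrable (fun θ => ((m:ℝ)+1-(l:ℝ)) * Real.cos ((l:ℝ)*θ)) MeasureTheory.volume 0 (2*Real.pi) :=
    fun l _ => (continuous_const.mul (Real.continuous_cos.comp
      (continuous_const.mul continuous_id))).intervalIntegrable _ _
  have hint2 : IntervalIntegrable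
      (fun θ : ℝ => 2 * ∑ l ∈ Finset.Icc 1 m, ((m:ℝ)+1-(l:ℝ)) * Real.cos ((l:ℝ)*θ))
      MeasureTheory.volume 0 (2*Real.pi) :=
    (continuous_const.mul (continuous_finset_sum _ fun l _ =>
      continuous_const.mul (Real.continuous_cos.comp
        (continuous_const.mul continuous_id)))).intervalIntegrable _ _
  unfold fejP
  rw [intervalIntegral.integral_add intervalIntegrable_const hint2,
    intervalIntegral.integral_const_mul,
    intervalIntegral.integral_finset_sum hint,
    Finset.sum_congr rfl hcos]
  simp [smul_eq_mul]
  ring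

lemma telescope (a : ℕ → ℝ) (θ : ℝ) (N : ℕ) :
    ∑ m ∈ Finset.range N, (a m - 2*a (m+1) + a (m+2)) * fejP m θ
    = (a 0 - ((N:ℝ)+1)*a N + (N:ℝ)*a (N+1))
      + 2 * ∑ l ∈ Finset.Icc 1 N,
          (a l - ((N:ℝ)+1-(l:ℝ))*a N + ((N:ℝ)-(l:ℝ))*a (N+1)) * Real.cos ((l:ℝ)*θ) := by
  induction N with
  | zero => simp
  | succ N ih =>
    have h1 : (1:ℕ) ≤ N + 1 := Nat.le_add_left 1 N
    have h3 : ∑ l ∈ Finset.Icc 1 N,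
        (a l - ((N:ℝ)+1+1-(l:ℝ))*a (N+1) + ((N:ℝ)+1-(l:ℝ))*a (N+2)) * Real.cos ((l:ℝ)*θ)
        = (∑ l ∈ Finset.Icc 1 N,
            (a l - ((N:ℝ)+1-(l:ℝ))*a N + ((N:ℝ)-(l:ℝ))*a (N+1)) * Real.cos ((l:ℝ)*θ))
          + (a N - 2*a (N+1) + a (N+2)) *
            ∑ l ∈ Finset.Icc 1 N, ((N:ℝ)+1-(l:ℝ)) * Real.cos ((l:ℝ)*θ) := by
      rw [Finset.mul_sum, ← Finset.sum_add_distrib]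
      exact Finset.sum_congr rfl fun l _ => by ring
    rw [Finset.sum_range_succ, ih, Finset.sum_Icc_succ_top h1]
    simp only [fejP, show N + 1 + 1 = N + 2 from rfl]
    push_cast
    linear_combination (-2:ℝ) * h3

lemma mvt_bound (f : ℝ → ℝ) (hf : Differentiable ℝ f) {K : ℝ}
    (hK : ∀ t, 0 ≤ t → |deriv f t| ≤ K) {x h : ℝ} (hx : 0 ≤ x) (hh : 0 < h) :
    |f (x + h) - f x| ≤ K * h := by
  obtain ⟨c, hc, hc2⟩ := exists_deriv_eq_slope f (by linarith : x < x + h)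
    hf.continuous.continuousOn (hf.differentiableOn)
  have he : x + h - x = h := by ring
  rw [he] at hc2
  have : f (x + h) - f x = deriv f c * h := by
    rw [hc2]; field_simp
  rw [this, abs_mul, abs_of_pos hh]
  exact mul_le_mul_of_nonneg_right (hK c (le_of_lt (lt_of_le_of_lt hx hc.1))) hh.le

theorem kernel_L1_bound (d : ℕ) (hd : 1 ≤ d) (M : ℝ) (hM : 0 < M) :
    ∃ C : ℝ, ∀ n : ℕ, 1 ≤ n → ∀ q : ℝ → ℝ,
      ContDiff ℝ (d + 1 : ℕ) q →
      (∀ t : ℝ, 0 ≤ t → ∀ i : ℕ, i ≤ d + 1 → |iteratedDeriv i q t| ≤ M) →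
      (∀ t : ℝ, 2 ≤ t → q t = 0) →
      (1 / (2 * Real.pi)) * ∫ θ in (0 : ℝ)..(2 * Real.pi),
          |q 0 + 2 * ∑ k ∈ Finset.Icc 1 (2 * n), q ((k : ℝ) / (n : ℝ)) * Real.cos ((k : ℝ) * θ)|
        ≤ C := by
  refine ⟨4*M, ?_⟩
  intro n hn q hq hqb hq2
  have hn0 : (0:ℝ) < n := by exact_mod_cast hn
  set a : ℕ → ℝ := fun k => q ((k:ℝ) / (n:ℝ)) with ha
  set b : ℕ → ℝ := fun m => a m - 2*a (m+1) + a (m+2) with hbdef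
  -- vanishing at the boundary
  have ha2n : a (2*n) = 0 := by
    have : ((2*n : ℕ) : ℝ) / (n:ℝ) = 2 := by push_cast; field_simp
    simp only [ha, this]
    exact hq2 2 le_rfl
  have ha2n1 : a (2*n+1) = 0 := by
    have h2 : (2:ℝ) ≤ ((2*n+1 : ℕ) : ℝ) / (n:ℝ) := by
      rw [le_div_iff₀ hn0]; push_cast; linarith
    exact hq2 _ h2
  -- differentiability facts
  have hqd : Differentiable ℝ q := hq.differentiable (by simp)
  have h2cd : ContDiff ℝ 2 q := hq.of_le (by exact_mod_cast (by omega : (2:ℕ) ≤ d+1))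
  have h11 : (2 : WithTop ℕ∞) = 1 + 1 := by norm_num
  rw [h11] at h2cd
  have hqd' : Differentiable ℝ (deriv q) :=
    ((contDiff_succ_iff_deriv.mp h2cd).2.2).differentiable one_ne_zero
  have hqd2 : ∀ t, 0 ≤ t → |deriv (deriv q) t| ≤ M := by
    intro t ht
    have := hqb t ht 2 (by omega)
    rwa [show (2:ℕ) = 1 + 1 from rfl, iteratedDeriv_succ, iteratedDeriv_one] at this
  -- second difference bound
  have hb : ∀ m : ℕ, |b m| ≤ M / (n:ℝ)^2 := by
    intro m
    set g : ℝ → ℝ := fun x => q (x + 1/(n:ℝ)) - q x with hg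
    have hgd : Differentiable ℝ g :=
      (hqd.comp (differentiable_id.add_const _)).sub hqd
    have hgderiv : ∀ x, deriv g x = deriv q (x + 1/(n:ℝ)) - deriv q x := by
      intro x
      have h1 : HasDerivAt (fun y : ℝ => q (y + 1/(n:ℝ))) (deriv q (x + 1/(n:ℝ))) x := by
        simpa [Function.comp_def] using HasDerivAt.comp x ((hqd (x + 1/(n:ℝ))).hasDerivAt)
          ((hasDerivAt_id x).add_const (1/(n:ℝ)))
      exact (h1.sub ((hqd x).hasDerivAt)).deriv
    have hgbound : ∀ t, 0 ≤ t → |deriv g t| ≤ M * (1/(n:ℝ)) := by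
      intro t ht
      rw [hgderiv]
      exact mvt_bound (deriv q) hqd' hqd2 ht (by positivity)
    have hkey : b m = g ((m:ℝ)/(n:ℝ) + 1/(n:ℝ)) - g ((m:ℝ)/(n:ℝ)) := by
      have c1 : ((m:ℝ)/(n:ℝ)) + 1/(n:ℝ) = ((m+1 : ℕ):ℝ)/(n:ℝ) := by
        push_cast; rw [← add_div]
      have c2 : ((m+1 : ℕ):ℝ)/(n:ℝ) + 1/(n:ℝ) = ((m+2 : ℕ):ℝ)/(n:ℝ) := by
        push_cast; rw [← add_div]; ring_nf
      simp only [hbdef, hg, ha, c1, c2]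
      ring
    have := mvt_bound g hgd hgbound (by positivity : (0:ℝ) ≤ (m:ℝ)/(n:ℝ))
      (by positivity : (0:ℝ) < 1/(n:ℝ))
    rw [← hkey] at this
    calc |b m| ≤ M * (1/(n:ℝ)) * (1/(n:ℝ)) := this
      _ = M / (n:ℝ)^2 := by ring
  -- representation
  have hQ : ∀ θ : ℝ, q 0 + 2 * ∑ k ∈ Finset.Icc 1 (2*n), q ((k:ℝ)/(n:ℝ)) * Real.cos ((k:ℝ)*θ)
      = ∑ m ∈ Finset.range (2*n), b m * fejP m θ := by
    intro θ
    rw [telescope a θ (2*n), ha2n, ha2n1]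
    simp only [mul_zero, sub_zero, add_zero]
    have h0 : a 0 = q 0 := by simp [ha]
    rw [h0]
  -- continuity / integrability
  have hQc : Continuous fun θ : ℝ =>
      q 0 + 2 * ∑ k ∈ Finset.Icc 1 (2*n), q ((k:ℝ)/(n:ℝ)) * Real.cos ((k:ℝ)*θ) :=
    continuous_const.add (continuous_const.mul (continuous_finset_sum _ fun k _ =>
      continuous_const.mul (Real.continuous_cos.comp (continuous_const.mul continuous_id))))
  have hFc : Continuous fun θ : ℝ => ∑ m ∈ Finset.range (2*n), (M/(n:ℝ)^2) * fejP m θ :=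
    continuous_finset_sum _ fun m _ => continuous_const.mul (fejP_cont m)
  have hpi : (0:ℝ) < Real.pi := Real.pi_pos
  -- pointwise bound
  have hptwise : ∀ θ ∈ Set.Icc (0:ℝ) (2*Real.pi),
      |q 0 + 2 * ∑ k ∈ Finset.Icc 1 (2*n), q ((k:ℝ)/(n:ℝ)) * Real.cos ((k:ℝ)*θ)|
        ≤ ∑ m ∈ Finset.range (2*n), (M/(n:ℝ)^2) * fejP m θ := by
    intro θ _
    rw [hQ θ]
    calc |∑ m ∈ Finset.range (2*n), b m * fejP m θ|
        ≤ ∑ m ∈ Finset.range (2*n), |b m * fejP m θ| := Finset.abs_sum_le_sum_abs _ _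
      _ ≤ ∑ m ∈ Finset.range (2*n), (M/(n:ℝ)^2) * fejP m θ := by
          refine Finset.sum_le_sum fun m _ => ?_
          rw [abs_mul, abs_of_nonneg (fejP_nonneg m θ)]
          exact mul_le_mul_of_nonneg_right (hb m) (fejP_nonneg m θ)
  -- integrate
  have hmono : (∫ θ in (0:ℝ)..(2*Real.pi),
      |q 0 + 2 * ∑ k ∈ Finset.Icc 1 (2*n), q ((k:ℝ)/(n:ℝ)) * Real.cos ((k:ℝ)*θ)|)
      ≤ ∫ θ in (0:ℝ)..(2*Real.pi), ∑ m ∈ Finset.range (2*n), (M/(n:ℝ)^2) * fejP m θ :=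
    intervalIntegral.integral_mono_on (by positivity)
      (hQc.abs.intervalIntegrable _ _) (hFc.intervalIntegrable _ _) hptwise
  have hFint : (∫ θ in (0:ℝ)..(2*Real.pi), ∑ m ∈ Finset.range (2*n), (M/(n:ℝ)^2) * fejP m θ)
      = ∑ m ∈ Finset.range (2*n), (M/(n:ℝ)^2) * (2*Real.pi*((m:ℝ)+1)) := by
    rw [intervalIntegral.integral_finset_sum (f := fun m θ => (M/(n:ℝ)^2) * fejP m θ) (fun m _ =>
      (continuous_const.mul (fejP_cont m)).intervalIntegrable _ _)]
    exact Finset.sum_congr rfl fun m _ => by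
      rw [intervalIntegral.integral_const_mul, fejP_integral m]
  have hsum : ∑ m ∈ Finset.range (2*n), (M/(n:ℝ)^2) * (2*Real.pi*((m:ℝ)+1))
      ≤ 2*Real.pi*(4*M) := by
    calc ∑ m ∈ Finset.range (2*n), (M/(n:ℝ)^2) * (2*Real.pi*((m:ℝ)+1))
        ≤ ∑ m ∈ Finset.range (2*n), (M/(n:ℝ)^2) * (2*Real.pi*(2*(n:ℝ))) := by
          refine Finset.sum_le_sum fun m hm => ?_
          have hmn : (m:ℝ)+1 ≤ 2*(n:ℝ) := by
            have := Finset.mem_range.mp hm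
            exact_mod_cast Nat.succ_le_of_lt (by exact_mod_cast this)
          gcongr
      _ = (2*n : ℕ) * ((M/(n:ℝ)^2) * (2*Real.pi*(2*(n:ℝ)))) := by
          rw [Finset.sum_const, Finset.card_range, nsmul_eq_mul]
      _ = 2*Real.pi*(4*M) := by
          push_cast
          field_simp
          ring
  have hfinal : (∫ θ in (0:ℝ)..(2*Real.pi),
      |q 0 + 2 * ∑ k ∈ Finset.Icc 1 (2*n), q ((k:ℝ)/(n:ℝ)) * Real.cos ((k:ℝ)*θ)|)
      ≤ 2*Real.pi*(4*M) := le_trans hmono (hFint ▸ hsum)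
  rw [div_mul_eq_mul_div, one_mul, div_le_iff₀ (by positivity : (0:ℝ) < 2*Real.pi)]
  calc (∫ θ in (0:ℝ)..(2*Real.pi),
      |q 0 + 2 * ∑ k ∈ Finset.Icc 1 (2*n), q ((k:ℝ)/(n:ℝ)) * Real.cos ((k:ℝ)*θ)|)
      ≤ 2*Real.pi*(4*M) := hfinal
    _ = 4*M*(2*Real.pi) := by ring
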